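/- Let p ≥ 1 and C_V, C_W ≥ 0. Let V : ℝ × ℝ^p → ℝ be continuous such that for each t the map V(t,·) is three times continuously differentiable and ℤ^p-periodic, for each 0 ≤ j ≤ 3 the map (t,x) ↦ iteratedFDeriv j (V(t,·)) x is continuous, and ‖iteratedFDeriv j (V(t,·)) x‖ ≤ C_V for all (t,x) and j ≤ 3. Let W : ℝ^p → ℝ be three times continuously differentiable and ℤ^p-periodic with ‖iteratedFDeriv j W x‖ ≤ C_W for all x and j ≤ 3. Let t ↦ ψ_t be a weak*-continuous family of Borel probability measures on ℝ^p and define P(t,x) = V(t,x) + ∫_{ℝ^p} W(x − x′) dψ_t(x′). Then: (1) P is continuous on ℝ × ℝ^p; (2) for each t, P(t,·) is three times continuously differentiable and ℤ^p-periodic; (3) ‖iteratedFDeriv j (P(t,·)) x‖ ≤ C_V + C_W for all (t,x) and all 0 ≤ j ≤ 3; (4) for each 0 ≤ j ≤ 3 the map (t,x) ↦ iteratedFDeriv j (P(t,·)) x is continuous. -/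

import Mathlib

open MeasureTheory

/-- The vector of `ℝ^p` with integer coordinates `k`. -/
def intVec (p : ℕ) (k : Fin p → ℤ) : EuclideanSpace ℝ (Fin p) := WithLp.toLp 2 (fun i => (k i : ℝ))

namespace Stmt0Aux

variable {p : ℕ}

/-- A continuous `ℤ^p`-periodic function is uniformly continuous. -/
lemma periodic_uniformContinuous {G : Type*} [NormedAddCommGroup G]
    (f : EuclideanSpace ℝ (Fin p) → G) (hf : Continuous f)
    (hper : ∀ (x : EuclideanSpace ℝ (Fin p)) (k : Fin p → ℤ), f (x + intVec p k) = f x) :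
    UniformContinuous f := by
  rw [Metric.uniformContinuous_iff]
  intro ε hε
  have hK : IsCompact (Metric.closedBall (0 : EuclideanSpace ℝ (Fin p)) (Real.sqrt p + 1)) :=
    isCompact_closedBall _ _
  have huc := hK.uniformContinuousOn_of_continuous hf.continuousOn
  rw [Metric.uniformContinuousOn_iff] at huc
  obtain ⟨δ, hδ, h⟩ := huc ε hε
  refine ⟨min δ 1, by positivity, ?_⟩
  intro x y hxy
  set k : Fin p → ℤ := fun i => -⌊x i⌋ with hk
  set z : EuclideanSpace ℝ (Fin p) := x + intVec p k with hz
  have hzi : ∀ i, z i = Int.fract (x i) := by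
    intro i
    simp [hz, hk, intVec, Int.fract, sub_eq_add_neg]
  have hznorm : ‖z‖ ≤ Real.sqrt p := by
    rw [EuclideanSpace.norm_eq]
    apply Real.sqrt_le_sqrt
    calc (∑ i, ‖z i‖ ^ 2) ≤ ∑ _i : Fin p, (1:ℝ) := by
          apply Finset.sum_le_sum
          intro i _
          have h1 : ‖z i‖ ≤ 1 := by
            rw [hzi i, Real.norm_eq_abs, abs_of_nonneg (Int.fract_nonneg _)]
            exact (Int.fract_lt_one _).le
          calc ‖z i‖ ^ 2 ≤ 1 ^ 2 := pow_le_pow_left₀ (norm_nonneg _) h1 2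
            _ = 1 := one_pow 2
      _ = p := by simp
  have hz1 : z ∈ Metric.closedBall (0 : EuclideanSpace ℝ (Fin p)) (Real.sqrt p + 1) := by
    rw [Metric.mem_closedBall, dist_zero_right]
    linarith
  have hz2 : z + (y - x) ∈ Metric.closedBall (0 : EuclideanSpace ℝ (Fin p)) (Real.sqrt p + 1) := by
    rw [Metric.mem_closedBall, dist_zero_right]
    have : ‖y - x‖ ≤ 1 := by
      rw [← dist_eq_norm, dist_comm]
      exact le_of_lt (lt_of_lt_of_le hxy (min_le_right _ _))
    calc ‖z + (y - x)‖ ≤ ‖z‖ + ‖y - x‖ := norm_add_le _ _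
      _ ≤ Real.sqrt p + 1 := by linarith
  have hfx : f x = f z := (hper x k).symm
  have hfy : f y = f (z + (y - x)) := by
    have : z + (y - x) = y + intVec p k := by rw [hz]; abel
    rw [this, hper y k]
  have hdzz : dist z (z + (y - x)) < δ := by
    rw [dist_eq_norm]
    have : z - (z + (y - x)) = x - y := by abel
    rw [this, ← dist_eq_norm]
    exact lt_of_lt_of_le hxy (min_le_left _ _)
  rw [hfx, hfy]
  exact h z hz1 (z + (y - x)) hz2 hdzz

/-- The Fréchet derivative of a periodic differentiable function is periodic. -/
lemma fderiv_periodic {G : Type*} [NormedAddCommGroup G] [NormedSpace ℝ G]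
    (f : EuclideanSpace ℝ (Fin p) → G) (hf : Differentiable ℝ f)
    (hper : ∀ (x : EuclideanSpace ℝ (Fin p)) (k : Fin p → ℤ), f (x + intVec p k) = f x) :
    ∀ (x : EuclideanSpace ℝ (Fin p)) (k : Fin p → ℤ),
      fderiv ℝ f (x + intVec p k) = fderiv ℝ f x := by
  intro x k
  have h1 : HasFDerivAt (fun z => f (z + intVec p k))
      ((fderiv ℝ f (x + intVec p k)).comp (ContinuousLinearMap.id ℝ _)) x :=
    (hf (x + intVec p k)).hasFDerivAt.comp x ((hasFDerivAt_id x).add_const _)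
  have h2 : (fun z => f (z + intVec p k)) = f := funext fun z => hper z k
  rw [h2] at h1
  have := h1.fderiv
  simpa using this.symm

/-- Bounded continuous functions are integrable against finite measures. -/
lemma integrable_of_bounded {G : Type*} [NormedAddCommGroup G]
    (μ : Measure (EuclideanSpace ℝ (Fin p))) [IsFiniteMeasure μ]
    (g : EuclideanSpace ℝ (Fin p) → G) (hg : Continuous g) (C : ℝ) (hb : ∀ x, ‖g x‖ ≤ C) :
    Integrable g μ :=
  (integrable_const C).mono' hg.aestronglyMeasurable (Filter.Eventually.of_forall hb)

lemma conv_norm_le {G : Type*} [NormedAddCommGroup G] [NormedSpace ℝ G]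
    (μ : Measure (EuclideanSpace ℝ (Fin p))) [IsProbabilityMeasure μ]
    (g : EuclideanSpace ℝ (Fin p) → G) (C : ℝ) (hb : ∀ x, ‖g x‖ ≤ C)
    (x : EuclideanSpace ℝ (Fin p)) :
    ‖∫ y, g (x - y) ∂μ‖ ≤ C := by
  have := norm_integral_le_of_norm_le_const (μ := μ) (f := fun y => g (x - y)) (C := C)
    (Filter.Eventually.of_forall fun y => hb _)
  simpa using this

set_option synthInstance.maxHeartbeats 1000000 in
/-- Differentiation under the integral sign for `x ↦ ∫ g (x - y) dμ`. -/
lemma conv_hasFDerivAt {G : Type*} [NormedAddCommGroup G] [NormedSpace ℝ G] [CompleteSpace G]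
    (μ : Measure (EuclideanSpace ℝ (Fin p))) [IsProbabilityMeasure μ]
    (g : EuclideanSpace ℝ (Fin p) → G) (hgd : Differentiable ℝ g) (hgc : Continuous g)
    (hg'c : Continuous (fderiv ℝ g)) (C C' : ℝ) (hb : ∀ x, ‖g x‖ ≤ C)
    (hb' : ∀ x, ‖fderiv ℝ g x‖ ≤ C') (x₀ : EuclideanSpace ℝ (Fin p)) :
    HasFDerivAt (fun x => ∫ y, g (x - y) ∂μ) (∫ y, fderiv ℝ g (x₀ - y) ∂μ) x₀ := by
  apply hasFDerivAt_integral_of_dominated_of_fderiv_le (s := Metric.ball x₀ 1)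
    (F := fun x a => g (x - a)) (F' := fun x a => fderiv ℝ g (x - a))
    (bound := fun _ => C') (Metric.ball_mem_nhds x₀ one_pos)
  · exact Filter.Eventually.of_forall fun x =>
      (hgc.comp (continuous_const.sub continuous_id)).aestronglyMeasurable
  · exact integrable_of_bounded μ _ (hgc.comp (continuous_const.sub continuous_id)) C
      (fun y => hb _)
  · exact (hg'c.comp (continuous_const.sub continuous_id)).aestronglyMeasurable
  · exact Filter.Eventually.of_forall fun a x _ => hb' _
  · exact integrable_const C'
  · refine Filter.Eventually.of_forall fun a x _ => ?_
    have h := ((hgd (x - a)).hasFDerivAt).comp x ((hasFDerivAt_id x).sub_const a)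
    simpa [Function.comp_def] using h

/-- Joint continuity for scalar-valued `(t,x) ↦ ∫ g (x - y) dψ t`. -/
lemma scalar_conv_cont (ψ : ℝ → Measure (EuclideanSpace ℝ (Fin p)))
    (hψprob : ∀ t, IsProbabilityMeasure (ψ t))
    (hψcont : ∀ f : EuclideanSpace ℝ (Fin p) → ℝ, Continuous f → (∃ C, ∀ x, |f x| ≤ C) →
      Continuous fun t => ∫ x, f x ∂(ψ t))
    (g : EuclideanSpace ℝ (Fin p) → ℝ) (hg : UniformContinuous g)
    (C : ℝ) (hb : ∀ x, ‖g x‖ ≤ C) :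
    Continuous fun q : ℝ × EuclideanSpace ℝ (Fin p) => ∫ y, g (q.2 - y) ∂ψ q.1 := by
  have hgc : Continuous g := hg.continuous
  have hint : ∀ t x, Integrable (fun y => g (x - y)) (ψ t) := fun t x => by
    haveI := hψprob t
    exact integrable_of_bounded (ψ t) _ (hgc.comp (continuous_const.sub continuous_id)) C
      (fun y => hb _)
  rw [continuous_iff_continuousAt]
  rintro ⟨t₀, x₀⟩
  rw [Metric.continuousAt_iff]
  intro ε hε
  obtain ⟨δ₁, hδ₁, h₁⟩ := Metric.uniformContinuous_iff.mp hg (ε/3) (by positivity)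
  have hc : ContinuousAt (fun t => ∫ y, g (x₀ - y) ∂ψ t) t₀ := by
    refine (hψcont _ (hgc.comp (continuous_const.sub continuous_id)) ⟨C, fun y => ?_⟩).continuousAt
    rw [← Real.norm_eq_abs]; exact hb _
  obtain ⟨δ₂, hδ₂, h₂⟩ := Metric.continuousAt_iff.mp hc (ε/3) (by positivity)
  refine ⟨min δ₁ δ₂, by positivity, ?_⟩
  rintro ⟨t, x⟩ hq
  haveI := hψprob t
  rw [Prod.dist_eq] at hq
  have hdt : dist t t₀ < δ₂ :=
    lt_of_le_of_lt (le_max_left _ _) (lt_of_lt_of_le hq (min_le_right _ _))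
  have hdx : dist x x₀ < δ₁ :=
    lt_of_le_of_lt (le_max_right _ _) (lt_of_lt_of_le hq (min_le_left _ _))
  have key1 : dist (∫ y, g (x - y) ∂ψ t) (∫ y, g (x₀ - y) ∂ψ t) ≤ ε/3 := by
    rw [dist_eq_norm, ← integral_sub (hint t x) (hint t x₀)]
    have hbnd : ∀ y, ‖g (x - y) - g (x₀ - y)‖ ≤ ε/3 := by
      intro y
      have hd : dist (x - y) (x₀ - y) < δ₁ := by rw [dist_sub_right]; exact hdx
      have := h₁ hd
      rw [Real.dist_eq] at this
      rw [Real.norm_eq_abs]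
      exact this.le
    have := norm_integral_le_of_norm_le_const (μ := ψ t)
      (f := fun y => g (x - y) - g (x₀ - y)) (C := ε/3) (Filter.Eventually.of_forall hbnd)
    simpa using this
  have key2 : dist (∫ y, g (x₀ - y) ∂ψ t) (∫ y, g (x₀ - y) ∂ψ t₀) < ε/3 := h₂ hdt
  calc dist (∫ y, g (x - y) ∂ψ t) (∫ y, g (x₀ - y) ∂ψ t₀)
      ≤ dist (∫ y, g (x - y) ∂ψ t) (∫ y, g (x₀ - y) ∂ψ t)
        + dist (∫ y, g (x₀ - y) ∂ψ t) (∫ y, g (x₀ - y) ∂ψ t₀) := dist_triangle _ _ _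
    _ < ε := by linarith

/-- Joint continuity for vector-valued `(t,x) ↦ ∫ g (x - y) dψ t`, with values in a
finite-dimensional space. -/
lemma vector_conv_cont {G : Type*} [NormedAddCommGroup G] [NormedSpace ℝ G]
    [FiniteDimensional ℝ G]
    (ψ : ℝ → Measure (EuclideanSpace ℝ (Fin p)))
    (hψprob : ∀ t, IsProbabilityMeasure (ψ t))
    (hψcont : ∀ f : EuclideanSpace ℝ (Fin p) → ℝ, Continuous f → (∃ C, ∀ x, |f x| ≤ C) →
      Continuous fun t => ∫ x, f x ∂(ψ t))
    (g : EuclideanSpace ℝ (Fin p) → G) (hg : UniformContinuous g)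
    (C : ℝ) (hb : ∀ x, ‖g x‖ ≤ C) :
    Continuous fun q : ℝ × EuclideanSpace ℝ (Fin p) => ∫ y, g (q.2 - y) ∂ψ q.1 := by
  haveI : CompleteSpace G := FiniteDimensional.complete ℝ G
  have hgc : Continuous g := hg.continuous
  have hint : ∀ t x, Integrable (fun y => g (x - y)) (ψ t) := fun t x => by
    haveI := hψprob t
    exact integrable_of_bounded (ψ t) _ (hgc.comp (continuous_const.sub continuous_id)) C
      (fun y => hb _)
  set b := Module.finBasis ℝ G with hb_def
  set φ : Fin (Module.finrank ℝ G) → G →L[ℝ] ℝ :=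
    fun i => LinearMap.toContinuousLinearMap (b.coord i) with hφ
  have key : (fun q : ℝ × EuclideanSpace ℝ (Fin p) => ∫ y, g (q.2 - y) ∂ψ q.1)
      = fun q => ∑ i, (∫ y, φ i (g (q.2 - y)) ∂ψ q.1) • b i := by
    funext q
    have h1 : ∀ i, ∫ y, φ i (g (q.2 - y)) ∂ψ q.1 = φ i (∫ y, g (q.2 - y) ∂ψ q.1) :=
      fun i => ContinuousLinearMap.integral_comp_comm (φ i) (hint q.1 q.2)
    simp_rw [h1]
    have := b.sum_repr (∫ y, g (q.2 - y) ∂ψ q.1)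
    simpa [hφ] using this.symm
  rw [key]
  apply continuous_finset_sum
  intro i _
  apply Continuous.smul _ continuous_const
  apply scalar_conv_cont ψ hψprob hψcont (fun z => φ i (g z))
    ((φ i).uniformContinuous.comp hg) (‖φ i‖ * C)
  intro x
  calc ‖φ i (g x)‖ ≤ ‖φ i‖ * ‖g x‖ := (φ i).le_opNorm _
    _ ≤ ‖φ i‖ * C := mul_le_mul_of_nonneg_left (hb _) (norm_nonneg _)

lemma lie_integral_comp_comm {A B : Type*} [NormedAddCommGroup A] [NormedSpace ℝ A]
    [NormedAddCommGroup B] [NormedSpace ℝ B] {X : Type*} [MeasurableSpace X] (μ : Measure X)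
    (e : A ≃ₗᵢ[ℝ] B) (φ : X → A) : ∫ x, e (φ x) ∂μ = e (∫ x, φ x ∂μ) := by
  have h := e.toContinuousLinearEquiv.integral_comp_comm (μ := μ) φ
  rw [LinearIsometryEquiv.coe_toContinuousLinearEquiv] at h
  exact h

lemma finDim_cmm (p j : ℕ) :
    FiniteDimensional ℝ
      (ContinuousMultilinearMap ℝ (fun _ : Fin j => EuclideanSpace ℝ (Fin p)) ℝ) :=
  FiniteDimensional.of_injective (ContinuousMultilinearMap.toMultilinearMapLinear)
    (fun _ _ h => ContinuousMultilinearMap.toMultilinearMap_injective h)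

end Stmt0Aux

open Stmt0Aux

set_option maxHeartbeats 1000000

/-- continuity, smoothness, periodicity and uniform `C³` bounds for the
interaction potential `P(t,x) = V(t,x) + ∫ W(x - x') dψ_t(x')`. -/
theorem stmt0
    (p : ℕ) (hp : 1 ≤ p) (C_V C_W : ℝ) (hCV : 0 ≤ C_V) (hCW : 0 ≤ C_W)
    (V : ℝ → EuclideanSpace ℝ (Fin p) → ℝ)
    (hVcont : Continuous fun q : ℝ × EuclideanSpace ℝ (Fin p) => V q.1 q.2)
    (hVsmooth : ∀ t, ContDiff ℝ 3 (V t))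
    (hVper : ∀ t (x : EuclideanSpace ℝ (Fin p)) (k : Fin p → ℤ),
      V t (x + intVec p k) = V t x)
    (hVderiv_cont : ∀ j ≤ 3, Continuous fun q : ℝ × EuclideanSpace ℝ (Fin p) =>
      iteratedFDeriv ℝ j (V q.1) q.2)
    (hVbound : ∀ j ≤ 3, ∀ t x, ‖iteratedFDeriv ℝ j (V t) x‖ ≤ C_V)
    (W : EuclideanSpace ℝ (Fin p) → ℝ)
    (hWsmooth : ContDiff ℝ 3 W)
    (hWper : ∀ (x : EuclideanSpace ℝ (Fin p)) (k : Fin p → ℤ),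
      W (x + intVec p k) = W x)
    (hWbound : ∀ j ≤ 3, ∀ x, ‖iteratedFDeriv ℝ j W x‖ ≤ C_W)
    (ψ : ℝ → Measure (EuclideanSpace ℝ (Fin p)))
    (hψprob : ∀ t, IsProbabilityMeasure (ψ t))
    (hψcont : ∀ f : EuclideanSpace ℝ (Fin p) → ℝ, Continuous f → (∃ C, ∀ x, |f x| ≤ C) →
      Continuous fun t => ∫ x, f x ∂(ψ t))
    (P : ℝ → EuclideanSpace ℝ (Fin p) → ℝ)
    (hP : ∀ t x, P t x = V t x + ∫ x', W (x - x') ∂(ψ t)) :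
    (Continuous fun q : ℝ × EuclideanSpace ℝ (Fin p) => P q.1 q.2) ∧
    (∀ t, ContDiff ℝ 3 (P t)) ∧
    (∀ t (x : EuclideanSpace ℝ (Fin p)) (k : Fin p → ℤ),
      P t (x + intVec p k) = P t x) ∧
    (∀ j ≤ 3, ∀ t x, ‖iteratedFDeriv ℝ j (P t) x‖ ≤ C_V + C_W) ∧
    (∀ j ≤ 3, Continuous fun q : ℝ × EuclideanSpace ℝ (Fin p) =>
      iteratedFDeriv ℝ j (P q.1) q.2) := by
  -- Basic facts about the iterated derivatives of `W`
  have hcontj : ∀ j : ℕ, j ≤ 3 → Continuous (iteratedFDeriv ℝ j W) := fun j hj =>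
    hWsmooth.continuous_iteratedFDeriv (by exact_mod_cast hj)
  have hdiffj : ∀ j : ℕ, j < 3 → Differentiable ℝ (iteratedFDeriv ℝ j W) := fun j hj =>
    hWsmooth.differentiable_iteratedFDeriv (by exact_mod_cast hj)
  have hperj : ∀ j : ℕ, j ≤ 3 → ∀ (x : EuclideanSpace ℝ (Fin p)) (k : Fin p → ℤ),
      iteratedFDeriv ℝ j W (x + intVec p k) = iteratedFDeriv ℝ j W x := by
    intro j
    induction j with
    | zero =>
      intro _ x k
      rw [iteratedFDeriv_zero_eq_comp, Function.comp_apply, Function.comp_apply, hWper x k]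
    | succ n ih =>
      intro hn x k
      have hd := hdiffj n (by omega)
      have hpern := ih (by omega)
      simp only [iteratedFDeriv_succ_eq_comp_left, Function.comp_apply]
      rw [fderiv_periodic _ hd hpern x k]
  have hucj : ∀ j : ℕ, j ≤ 3 → UniformContinuous (iteratedFDeriv ℝ j W) := fun j hj =>
    periodic_uniformContinuous _ (hcontj j hj) (hperj j hj)
  have hfdj : ∀ (j : ℕ) (z : EuclideanSpace ℝ (Fin p)),
      fderiv ℝ (iteratedFDeriv ℝ j W) z
        = (continuousMultilinearCurryLeftEquiv ℝ
            (fun _ : Fin (j+1) => EuclideanSpace ℝ (Fin p)) ℝ)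
            (iteratedFDeriv ℝ (j+1) W z) := by
    intro j z
    have h := congrFun (iteratedFDeriv_succ_eq_comp_left (𝕜 := ℝ) (f := W) (n := j)) z
    rw [h]
    simp
  have hfcj : ∀ j : ℕ, j < 3 → Continuous (fderiv ℝ (iteratedFDeriv ℝ j W)) := by
    intro j hj
    have h : fderiv ℝ (iteratedFDeriv ℝ j W) = fun z =>
        (continuousMultilinearCurryLeftEquiv ℝ
          (fun _ : Fin (j+1) => EuclideanSpace ℝ (Fin p)) ℝ)
          (iteratedFDeriv ℝ (j+1) W z) := funext (hfdj j)
    rw [h]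
    exact (LinearIsometryEquiv.continuous _).comp (hcontj (j+1) (by omega))
  have hfbj : ∀ j : ℕ, j < 3 → ∀ z, ‖fderiv ℝ (iteratedFDeriv ℝ j W) z‖ ≤ C_W := by
    intro j hj z
    rw [hfdj j z, LinearIsometryEquiv.norm_map]
    exact hWbound (j+1) (by omega) z
  -- Differentiation under the integral sign
  have hstep : ∀ j : ℕ, j < 3 → ∀ (t : ℝ) (x₀ : EuclideanSpace ℝ (Fin p)),
      HasFDerivAt (fun x => ∫ y, iteratedFDeriv ℝ j W (x - y) ∂ψ t)
        ((continuousMultilinearCurryLeftEquiv ℝ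
            (fun _ : Fin (j+1) => EuclideanSpace ℝ (Fin p)) ℝ)
          (∫ y, iteratedFDeriv ℝ (j+1) W (x₀ - y) ∂ψ t)) x₀ := by
    intro j hj t x₀
    haveI := hψprob t
    have h := conv_hasFDerivAt (ψ t) (iteratedFDeriv ℝ j W) (hdiffj j hj)
      (hcontj j (by omega)) (hfcj j hj) C_W C_W (hWbound j (by omega)) (hfbj j hj) x₀
    have heq : (∫ y, fderiv ℝ (iteratedFDeriv ℝ j W) (x₀ - y) ∂ψ t)
        = (continuousMultilinearCurryLeftEquiv ℝ
            (fun _ : Fin (j+1) => EuclideanSpace ℝ (Fin p)) ℝ)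
          (∫ y, iteratedFDeriv ℝ (j+1) W (x₀ - y) ∂ψ t) := by
      simp only [hfdj]
      exact lie_integral_comp_comm (ψ t) _ _
    rw [heq] at h
    exact h
  -- Joint continuity of the convolution integrals
  have hujoint : ∀ j : ℕ, j ≤ 3 →
      Continuous fun q : ℝ × EuclideanSpace ℝ (Fin p) =>
        ∫ y, iteratedFDeriv ℝ j W (q.2 - y) ∂ψ q.1 := by
    intro j hj
    haveI := finDim_cmm p j
    exact vector_conv_cont ψ hψprob hψcont _ (hucj j hj) C_W (fun x => hWbound j hj x)
  -- The iterated derivatives of the convolution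
  have hform : ∀ j : ℕ, j ≤ 3 → ∀ t : ℝ,
      iteratedFDeriv ℝ j (fun x => ∫ y, W (x - y) ∂ψ t)
        = fun x => ∫ y, iteratedFDeriv ℝ j W (x - y) ∂ψ t := by
    intro j
    induction j with
    | zero =>
      intro _ t
      funext x
      haveI := hψprob t
      simp only [iteratedFDeriv_zero_eq_comp, Function.comp_apply]
      exact (lie_integral_comp_comm (ψ t)
        (continuousMultilinearCurryFin0 ℝ (EuclideanSpace ℝ (Fin p)) ℝ).symm
        (fun y => W (x - y))).symm
    | succ n ih =>
      intro hn t
      funext x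
      have h1 := congrFun (iteratedFDeriv_succ_eq_comp_left (𝕜 := ℝ)
        (f := fun x => ∫ y, W (x - y) ∂ψ t) (n := n)) x
      rw [h1]
      simp only [Function.comp_apply]
      rw [ih (by omega) t, (hstep n (by omega) t x).fderiv]
      simp
  -- ContDiff of the convolution
  have hcd : ∀ t, ContDiff ℝ 3 (fun x => ∫ y, W (x - y) ∂ψ t) := by
    intro t
    have h : ContDiff ℝ ((3:ℕ∞) : WithTop ℕ∞) (fun x => ∫ y, W (x - y) ∂ψ t) := by
      rw [contDiff_iff_continuous_differentiable]
      constructor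
      · intro m hm
        have hm' : m ≤ 3 := by exact_mod_cast hm
        rw [hform m hm' t]
        exact (hujoint m hm').comp (Continuous.prodMk_right t)
      · intro m hm
        have hm' : m < 3 := by exact_mod_cast hm
        rw [hform m (by omega) t]
        exact fun x => (hstep m hm' t x).differentiableAt
    exact_mod_cast h
  -- auxiliary facts about `W` itself
  have hWb : ∀ x, ‖W x‖ ≤ C_W := by
    intro x
    have := hWbound 0 (by norm_num) x
    simpa using this
  have hucW : UniformContinuous W :=
    periodic_uniformContinuous W hWsmooth.continuous hWper
  have hPt : ∀ t, P t = fun x => V t x + ∫ y, W (x - y) ∂ψ t := fun t => funext fun x => hP t x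
  refine ⟨?_, ?_, ?_, ?_, ?_⟩
  · -- (1) joint continuity of P
    have hPq : (fun q : ℝ × EuclideanSpace ℝ (Fin p) => P q.1 q.2)
        = fun q => V q.1 q.2 + ∫ y, W (q.2 - y) ∂ψ q.1 := funext fun q => hP q.1 q.2
    rw [hPq]
    exact hVcont.add (scalar_conv_cont ψ hψprob hψcont W hucW C_W hWb)
  · -- (2) smoothness
    intro t
    rw [hPt t]
    exact (hVsmooth t).add (hcd t)
  · -- (3) periodicity
    intro t x k
    rw [hP, hP]
    have hint : ∀ y, W (x + intVec p k - y) = W (x - y) := by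
      intro y
      rw [show x + intVec p k - y = (x - y) + intVec p k by abel]
      exact hWper _ k
    simp only [hint]
    rw [hVper t x k]
  · -- (4) uniform bounds
    intro j hj t x
    haveI := hψprob t
    rw [hPt t]
    rw [iteratedFDeriv_add_apply' ((hVsmooth t).contDiffAt.of_le (by exact_mod_cast hj))
      ((hcd t).contDiffAt.of_le (by exact_mod_cast hj))]
    refine le_trans (norm_add_le _ _) ?_
    have h1 := hVbound j hj t x
    have h2 : ‖iteratedFDeriv ℝ j (fun x => ∫ y, W (x - y) ∂ψ t) x‖ ≤ C_W := by
      rw [hform j hj t]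
      exact conv_norm_le (ψ t) _ C_W (fun z => hWbound j hj z) x
    linarith
  · -- (5) joint continuity of the derivatives
    intro j hj
    have hkey : (fun q : ℝ × EuclideanSpace ℝ (Fin p) => iteratedFDeriv ℝ j (P q.1) q.2)
        = fun q => iteratedFDeriv ℝ j (V q.1) q.2
            + (fun x => ∫ y, iteratedFDeriv ℝ j W (x - y) ∂ψ q.1) q.2 := by
      funext q
      rw [hPt q.1]
      rw [iteratedFDeriv_add_apply' ((hVsmooth q.1).contDiffAt.of_le (by exact_mod_cast hj))
        ((hcd q.1).contDiffAt.of_le (by exact_mod_cast hj))]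
      rw [hform j hj q.1]
    rw [hkey]
    exact (hVderiv_cont j hj).add (hujoint j hj)
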